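/- Let d ≥ 1 and let Σ and Δ be two complementary isotropic d-dimensional linear subspaces of ℝ^d_d (so ℝ^d_d = Σ ⊕ Δ), and let P_Δ denote the projection onto Δ along Σ. Let v₀ ∈ Δ, let 1 ≤ k ≤ d, and let u₁, …, u_k ∈ ℝ^d_d be points such that the k+1 points v₀, P_Δ(u₁), …, P_Δ(u_k) are affinely independent. Then for any real numbers c₁, …, c_k there exists a point u₀ ∈ ℝ^d_d such that ⟨u₀ − uᵢ, u₀ − uᵢ⟩ = cᵢ for every 1 ≤ i ≤ k, and P_Δ(u₀) = v₀. -/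

import Mathlib

open Module

/-- The Minkowski space `ℝ^d_d`. -/
abbrev Mink (d : ℕ) :=
  EuclideanSpace ℝ (Fin d) × EuclideanSpace ℝ (Fin d)

/-- The indefinite bilinear form of signature `(d, d)` on `Mink d`. -/
noncomputable def mform (d : ℕ) (u v : Mink d) : ℝ :=
  inner ℝ u.1 v.1 - inner ℝ u.2 v.2

/-- `mform` as a bilinear map. -/
noncomputable def mB (d : ℕ) : Mink d →ₗ[ℝ] Mink d →ₗ[ℝ] ℝ :=
  LinearMap.mk₂ ℝ (mform d)
    (fun x y z => by
      simp only [mform, Prod.fst_add, Prod.snd_add, inner_add_left]; ring)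
    (fun c x y => by
      simp only [mform, Prod.smul_fst, Prod.smul_snd, real_inner_smul_left, smul_eq_mul]; ring)
    (fun x y z => by
      simp only [mform, Prod.fst_add, Prod.snd_add, inner_add_right]; ring)
    (fun c x y => by
      simp only [mform, Prod.smul_fst, Prod.smul_snd, real_inner_smul_right, smul_eq_mul]; ring)

@[simp] lemma mB_apply (d : ℕ) (x y : Mink d) : mB d x y = mform d x y := rfl

lemma mform_comm (d : ℕ) (x y : Mink d) : mform d x y = mform d y x := by
  simp only [mform]
  rw [real_inner_comm x.1 y.1, real_inner_comm x.2 y.2]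

/-- An isotropic subspace is totally isotropic (polarization). -/
lemma iso_pair {d : ℕ} {p : Submodule ℝ (Mink d)}
    (hiso : ∀ x ∈ p, mform d x x = 0) {x y : Mink d}
    (hx : x ∈ p) (hy : y ∈ p) : mform d x y = 0 := by
  have h1 := hiso (x + y) (add_mem hx hy)
  have h2 := hiso x hx
  have h3 := hiso y hy
  have hexp : mform d (x + y) (x + y)
      = mform d x x + mform d x y + (mform d y x + mform d y y) := by
    simp only [mform, Prod.fst_add, Prod.snd_add, inner_add_left, inner_add_right]; ring
  have hc := mform_comm d x y
  rw [hexp, h2, h3] at h1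
  linarith

/-- Nondegeneracy of `mform`. -/
lemma mform_nondeg {d : ℕ} {x : Mink d} (h : ∀ y : Mink d, mform d x y = 0) :
    x = 0 := by
  have hx := h (x.1, -x.2)
  simp only [mform] at hx
  have h1 : (inner ℝ x.1 x.1 : ℝ) + inner ℝ x.2 x.2 = 0 := by
    simpa [inner_neg_right] using hx
  have ha := real_inner_self_nonneg (x := x.1)
  have hb := real_inner_self_nonneg (x := x.2)
  have hx1 : x.1 = 0 := by
    have : (inner ℝ x.1 x.1 : ℝ) = 0 := by linarith
    exact inner_self_eq_zero.mp this
  have hx2 : x.2 = 0 := by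
    have : (inner ℝ x.2 x.2 : ℝ) = 0 := by linarith
    exact inner_self_eq_zero.mp this
  exact Prod.ext hx1 hx2

lemma mform_add_self (d : ℕ) (a b : Mink d) :
    mform d (a + b) (a + b) = mform d a a + 2 * mform d a b + mform d b b := by
  have h := mform_comm d a b
  simp only [mform, Prod.fst_add, Prod.snd_add, inner_add_left, inner_add_right] at h ⊢
  linarith

theorem lemma_linear (d : ℕ) (hd : 1 ≤ d)
    (Sg Dl : Submodule ℝ (Mink d)) (hcompl : IsCompl Sg Dl)
    (hSgiso : ∀ x ∈ Sg, mform d x x = 0) (hDliso : ∀ x ∈ Dl, mform d x x = 0)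
    (hSgdim : finrank ℝ Sg = d) (hDldim : finrank ℝ Dl = d)
    (PΔ : Mink d → Mink d)
    (hPΔ : ∀ x : Mink d, PΔ x = (Dl.linearProjOfIsCompl Sg hcompl.symm x : Mink d))
    (v₀ : Mink d) (hv₀ : v₀ ∈ Dl)
    (k : ℕ) (hk1 : 1 ≤ k) (hkd : k ≤ d) (u : Fin k → Mink d)
    (hindep : AffineIndependent ℝ (Fin.cons v₀ (fun i => PΔ (u i)) : Fin (k + 1) → Mink d))
    (c : Fin k → ℝ) :
    ∃ u₀ : Mink d,
      (∀ i : Fin k, mform d (u₀ - u i) (u₀ - u i) = c i) ∧ PΔ u₀ = v₀ := by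
  classical
  set f : Fin (k + 1) → Mink d := (Fin.cons v₀ (fun i => PΔ (u i))) with hf
  -- the vectors δ i = PΔ (u i) - v₀
  set δ : Fin k → Mink d := fun i => PΔ (u i) - v₀ with hδ
  have hδmem : ∀ i, δ i ∈ Dl := by
    intro i
    simp only [hδ, hPΔ]
    exact sub_mem (SetLike.coe_mem _) hv₀
  -- linear independence of δ
  have hli : LinearIndependent ℝ δ := by
    have h0 := (affineIndependent_iff_linearIndependent_vsub ℝ f 0).mp hindep
    let e : Fin k → {x : Fin (k + 1) // x ≠ (0 : Fin (k + 1))} :=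
      fun i => ⟨i.succ, Fin.succ_ne_zero i⟩
    have einj : Function.Injective e := by
      intro a b hab
      simp only [e, Subtype.mk.injEq] at hab
      exact Fin.succ_injective _ hab
    have h1 := h0.comp e einj
    have heq : (fun i : {x : Fin (k + 1) // x ≠ (0 : Fin (k + 1))} => f (i : Fin (k + 1)) -ᵥ f 0) ∘ e = δ := by
      funext i
      simp only [hf, hδ, e, Function.comp_apply, vsub_eq_sub, Fin.cons_succ, Fin.cons_zero]
    exact heq ▸ h1
  -- the lifted vectors in Dl
  set δ' : Fin k → Dl := fun i => ⟨δ i, hδmem i⟩ with hδ'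
  have hli' : LinearIndependent ℝ δ' := by
    apply LinearIndependent.of_comp Dl.subtype
    exact hli
  -- the target values
  set t : Fin k → ℝ := fun i => (mform d (v₀ - u i) (v₀ - u i) - c i) / 2 with ht
  -- a dual functional on Dl taking value t i at δ' i
  obtain ⟨f₀, hf₀⟩ : ∃ f₀ : Module.Dual ℝ Dl, ∀ i, f₀ (δ' i) = t i := by
    let bs : Basis (Fin k) ℝ (Submodule.span ℝ (Set.range δ')) := Module.Basis.span hli'
    let g : Submodule.span ℝ (Set.range δ') →ₗ[ℝ] ℝ := bs.constr ℝ t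
    obtain ⟨F, hF⟩ := LinearMap.exists_extend g
    refine ⟨F, fun i => ?_⟩
    have hmem : δ' i ∈ Submodule.span ℝ (Set.range δ') :=
      Submodule.subset_span ⟨i, rfl⟩
    have hbs : ((bs i : Submodule.span ℝ (Set.range δ')) : Dl) = δ' i :=
      congrArg Subtype.val (Module.Basis.span_apply hli' i)
    have h2 : F (δ' i) = F ((bs i : Submodule.span ℝ (Set.range δ')) : Dl) := by rw [hbs]
    rw [h2]
    have h3 := DFunLike.congr_fun hF (bs i)
    simp only [LinearMap.comp_apply, Submodule.subtype_apply] at h3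
    rw [h3]
    simp [g]
  -- the pairing map from Sg to the dual of Dl
  let ψ : Sg →ₗ[ℝ] Module.Dual ℝ Dl :=
    LinearMap.compl₂ ((mB d).domRestrict Sg) Dl.subtype
  have hψapp : ∀ (s : Sg) (y : Dl), ψ s y = mform d (s : Mink d) (y : Mink d) :=
    fun s y => rfl
  -- ψ is injective
  have hψinj : Function.Injective ψ := by
    rw [injective_iff_map_eq_zero]
    intro s hs
    have hall : ∀ y : Mink d, mform d (s : Mink d) y = 0 := by
      intro y
      have hy : y ∈ Sg ⊔ Dl := by
        rw [hcompl.sup_eq_top]; trivial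
      obtain ⟨a, ha, b, hb, rfl⟩ := Submodule.mem_sup.mp hy
      have h1 : mform d (s : Mink d) a = 0 := iso_pair hSgiso s.2 ha
      have h2 : mform d (s : Mink d) b = 0 := by
        have h4 := DFunLike.congr_fun hs ⟨b, hb⟩
        rw [hψapp] at h4
        simpa using h4
      have : mform d (s : Mink d) (a + b) = mform d s a + mform d s b := by
        simp only [mform, Prod.fst_add, Prod.snd_add, inner_add_right]; ring
      rw [this, h1, h2, add_zero]
    have : (s : Mink d) = 0 := mform_nondeg hall
    exact Subtype.ext this
  -- ψ is surjective by dimension count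
  have hψsurj : Function.Surjective ψ := by
    have hfr : finrank ℝ Sg = finrank ℝ (Module.Dual ℝ Dl) := by
      rw [Subspace.dual_finrank_eq, hSgdim, hDldim]
    exact (LinearMap.injective_iff_surjective_of_finrank_eq_finrank hfr).mp hψinj
  obtain ⟨s, hs⟩ := hψsurj f₀
  have hsδ : ∀ i, mform d (s : Mink d) (δ i) = t i := by
    intro i
    have h := DFunLike.congr_fun hs (δ' i)
    rw [hψapp, hf₀ i] at h
    exact h
  refine ⟨(s : Mink d) + v₀, ?_, ?_⟩
  · intro i
    have hkey : (s : Mink d) + v₀ - u i = (s : Mink d) + (v₀ - u i) := by abel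
    rw [hkey, mform_add_self]
    have h1 : mform d (s : Mink d) (s : Mink d) = 0 := hSgiso _ s.2
    -- decompose u i
    have hdecomp : (Sg.linearProjOfIsCompl Dl hcompl (u i) : Mink d)
        + (Dl.linearProjOfIsCompl Sg hcompl.symm (u i) : Mink d) = u i :=
      Submodule.projection_add_projection_eq_self hcompl (u i)
    set σ : Mink d := (Sg.linearProjOfIsCompl Dl hcompl (u i) : Mink d) with hσ
    have hδi : δ i = (Dl.linearProjOfIsCompl Sg hcompl.symm (u i) : Mink d) - v₀ := by
      simp only [hδ, hPΔ]
    have hv : v₀ - u i = -(δ i) - σ := by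
      have habel : -(((Dl.linearProjOfIsCompl Sg hcompl.symm (u i) : Mink d)) - v₀) - σ
          = v₀ - (σ + (Dl.linearProjOfIsCompl Sg hcompl.symm (u i) : Mink d)) := by abel
      rw [hδi, habel, hdecomp]
    have h2 : mform d (s : Mink d) (v₀ - u i) = -(t i) := by
      have hlin : mform d (s : Mink d) (-(δ i) - σ)
          = -(mform d (s : Mink d) (δ i)) - mform d (s : Mink d) σ := by
        simp only [mform, Prod.fst_sub, Prod.snd_sub, Prod.fst_neg, Prod.snd_neg,
          inner_sub_right, inner_neg_right]; ring
      rw [hv, hlin, hsδ i, iso_pair hSgiso s.2 (SetLike.coe_mem _)]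
      ring
    rw [h1, h2, ht]
    ring
  · rw [hPΔ]
    have : Dl.linearProjOfIsCompl Sg hcompl.symm ((s : Mink d) + v₀)
        = Dl.linearProjOfIsCompl Sg hcompl.symm (s : Mink d)
          + Dl.linearProjOfIsCompl Sg hcompl.symm v₀ := map_add _ _ _
    erw [this,
      Submodule.projectionOnto_apply_of_mem_right hcompl.symm s.2,
      Submodule.projectionOnto_apply_left hcompl.symm ⟨v₀, hv₀⟩]
    simp
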